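/- (Theorem 2, part (ii), initial bang.) Let B, C be Hermitian n×n matrices, H(v) := vB + (1−v)C, and t_f > 0. Let ρ, p : [0,t_f] → (Hermitian n×n matrices) be continuous, let s : [0,t_f] → [0,1], and suppose: (a) [B, ρ(0)] = 0; (b) there is a real constant λ > 0 with Re Tr(p(t)·(−i)[H(s(t)), ρ(t)]) = λ for every t ∈ [0,t_f]; and (c) for every t ∈ [0,t_f] and every v ∈ [0,1], Re Tr(p(t)·(−i)[H(v), ρ(t)]) ≤ λ. Then there exists ε' > 0 such that s(t) = 0 for all t ∈ [0, ε'). -/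

import Mathlib

set_option maxHeartbeats 1000000

open MeasureTheory Matrix

noncomputable section

namespace Stmt3

variable {n : ℕ}

/-- The superoperator `K_X(ρ) = −i[X, ρ]`. -/
def K (X ρ : Matrix (Fin n) (Fin n) ℂ) : Matrix (Fin n) (Fin n) ℂ :=
  (-Complex.I) • (X * ρ - ρ * X)

/-- The control Hamiltonian `H(v) = vB + (1−v)C`. -/
def Ham (B C : Matrix (Fin n) (Fin n) ℂ) (v : ℝ) : Matrix (Fin n) (Fin n) ℂ :=
  (v : ℂ) • B + (1 - (v : ℂ)) • C

lemma key_lin (B C P R : Matrix (Fin n) (Fin n) ℂ) (v : ℝ) :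
    (Matrix.trace (P * K (Ham B C v) R)).re
      = v * (Matrix.trace (P * K B R)).re + (1-v) * (Matrix.trace (P * K C R)).re := by
  have h : Matrix.trace (P * K (Ham B C v) R)
      = (v:ℂ) * Matrix.trace (P * K B R) + (1-(v:ℂ)) * Matrix.trace (P * K C R) := by
    simp only [K, Ham, mul_sub, sub_mul, add_mul, mul_add, smul_sub, smul_add, smul_smul,
      mul_smul_comm, smul_mul_assoc, Matrix.trace_sub, Matrix.trace_add, Matrix.trace_smul,
      smul_eq_mul]
    ring
  rw [h]
  simp [Complex.add_re, Complex.mul_re, Complex.sub_re, Complex.ofReal_re, Complex.ofReal_im]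

lemma cont_aux (X : Matrix (Fin n) (Fin n) ℂ) :
    Continuous (fun x : Matrix (Fin n) (Fin n) ℂ × Matrix (Fin n) (Fin n) ℂ =>
      (Matrix.trace (x.1 * K X x.2)).re) := by
  apply Complex.continuous_re.comp
  apply Continuous.matrix_trace
  exact continuous_fst.matrix_mul (((continuous_const.matrix_mul continuous_snd).fun_sub
    (continuous_snd.matrix_mul continuous_const)).fun_const_smul _)

/-- **Theorem 2, part (ii), initial bang**: under the PMP conditions with an active final-time
constraint (`λ > 0`), if the initial state commutes with the driver `B` then the control is
`s ≡ 0` on an initial interval `[0, ε')`. -/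
theorem initial_bang
    (B C : Matrix (Fin n) (Fin n) ℂ) (hB : B.IsHermitian) (hC : C.IsHermitian)
    (tf : ℝ) (htf : 0 < tf)
    (ρ p : ℝ → Matrix (Fin n) (Fin n) ℂ) (s : ℝ → ℝ)
    (hρcont : ContinuousOn ρ (Set.Icc 0 tf)) (hpcont : ContinuousOn p (Set.Icc 0 tf))
    (hρHerm : ∀ t ∈ Set.Icc (0 : ℝ) tf, (ρ t).IsHermitian)
    (hpHerm : ∀ t ∈ Set.Icc (0 : ℝ) tf, (p t).IsHermitian)
    (hsval : ∀ t ∈ Set.Icc (0 : ℝ) tf, s t ∈ Set.Icc (0 : ℝ) 1)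
    -- (a) the initial state commutes with the driver Hamiltonian
    (hcomm : B * ρ 0 = ρ 0 * B)
    -- (b) the PMP control Hamiltonian is constant and equal to `λ > 0`
    (lam : ℝ) (hlam : 0 < lam)
    (hconst : ∀ t ∈ Set.Icc (0 : ℝ) tf,
      (Matrix.trace (p t * K (Ham B C (s t)) (ρ t))).re = lam)
    -- (c) the maximum condition
    (hmax : ∀ t ∈ Set.Icc (0 : ℝ) tf, ∀ v ∈ Set.Icc (0 : ℝ) 1,
      (Matrix.trace (p t * K (Ham B C v) (ρ t))).re ≤ lam) :
    ∃ ε' > 0, ∀ t ∈ Set.Ico (0 : ℝ) ε', s t = 0 := by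
  set g : ℝ → ℝ := fun t => (Matrix.trace (p t * K B (ρ t))).re with hg
  set h : ℝ → ℝ := fun t => (Matrix.trace (p t * K C (ρ t))).re with hh
  -- value of g at 0
  have hg0 : g 0 = 0 := by
    have : K B (ρ 0) = 0 := by
      simp [K, hcomm]
    simp [hg, this]
  -- value of h at 0
  have h0mem : (0:ℝ) ∈ Set.Icc (0:ℝ) tf := ⟨le_refl 0, le_of_lt htf⟩
  have hs0 := hsval 0 h0mem
  have hc0 : s 0 * g 0 + (1 - s 0) * h 0 = lam := by
    have := hconst 0 h0mem
    rwa [key_lin] at this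
  have hmax0 : h 0 ≤ lam := by
    have := hmax 0 h0mem 0 ⟨le_refl 0, zero_le_one⟩
    rwa [key_lin, zero_mul, zero_add, sub_zero, one_mul] at this
  have hh0 : h 0 = lam := by
    rw [hg0, mul_zero, zero_add] at hc0
    have h1 : lam ≤ (1 - s 0) * lam := by
      calc lam = (1 - s 0) * h 0 := hc0.symm
        _ ≤ (1 - s 0) * lam := mul_le_mul_of_nonneg_left hmax0 (by linarith [hs0.2])
    have hs00 : s 0 ≤ 0 := by nlinarith [hs0.1]
    have hs0z : s 0 = 0 := le_antisymm hs00 hs0.1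
    rw [hs0z] at hc0
    linarith
  -- F = h - g is continuous on [0, tf] and positive at 0
  have hF : ContinuousOn (fun t => h t - g t) (Set.Icc 0 tf) := by
    have hc : ContinuousOn (fun t => (p t, ρ t)) (Set.Icc 0 tf) := hpcont.prodMk hρcont
    have h1 : ContinuousOn g (Set.Icc 0 tf) := by
      have := (cont_aux B).comp_continuousOn hc
      simpa [hg, Function.comp_def] using this
    have h2 : ContinuousOn h (Set.Icc 0 tf) := by
      have := (cont_aux C).comp_continuousOn hc
      simpa [hh, Function.comp_def] using this
    exact h2.sub h1
  have hF0 : (0:ℝ) < h 0 - g 0 := by rw [hg0, hh0]; linarith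
  -- get a neighborhood where h > g
  have hev : ∀ᶠ t in nhdsWithin 0 (Set.Icc 0 tf), 0 < h t - g t :=
    (hF 0 h0mem).eventually (eventually_gt_nhds hF0)
  rw [eventually_nhdsWithin_iff] at hev
  rcases Metric.eventually_nhds_iff.mp hev with ⟨δ, hδpos, hδ⟩
  refine ⟨min δ tf, lt_min hδpos htf, ?_⟩
  intro t ht
  have htmem : t ∈ Set.Icc (0:ℝ) tf :=
    ⟨ht.1, le_of_lt (lt_of_lt_of_le ht.2 (min_le_right _ _))⟩
  have htδ : dist t 0 < δ := by
    rw [Real.dist_eq, sub_zero, abs_of_nonneg ht.1]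
    exact lt_of_lt_of_le ht.2 (min_le_left _ _)
  have hgh : 0 < h t - g t := hδ htδ htmem
  have hst := hsval t htmem
  have hct : s t * g t + (1 - s t) * h t = lam := by
    have := hconst t htmem
    rwa [key_lin] at this
  have hmt : h t ≤ lam := by
    have := hmax t htmem 0 ⟨le_refl 0, zero_le_one⟩
    rwa [key_lin, zero_mul, zero_add, sub_zero, one_mul] at this
  -- s t * (h t - g t) = h t - lam ≤ 0 and ≥ 0
  have h1 : s t * (h t - g t) ≤ 0 := by nlinarith
  have h2 : 0 ≤ s t * (h t - g t) := mul_nonneg hst.1 (le_of_lt hgh)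
  have h3 : s t * (h t - g t) = 0 := le_antisymm h1 h2
  rcases mul_eq_zero.mp h3 with h4 | h4
  · exact h4
  · linarith

end Stmt3
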